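/- Let X be a centered Gaussian process on ℝ with stationary correlation r satisfying r(t) = 1 − a|t|^α(1+o(1)) as t → 0, with a > 0 and α ∈ (0,2]. Then for Z_u(t) = u(X(u^{−2/α} t) − u), conditionally on X(0) = u − w/u, the variance of the increment Var(Z_u(t) − Z_u(s)) converges to 2a|t−s|^α as u → ∞, for every fixed s, t. -/

import Mathlib

open Filter

lemma stmt_6_aux
    (r : ℝ → ℝ) (a α : ℝ) (ha : 0 < a) (hα : 0 < α)
    (hr0 : r 0 = 1)
    (hr : Tendsto (fun t => (1 - r t) / (a * |t| ^ α))
      (nhdsWithin 0 {(0 : ℝ)}ᶜ) (nhds 1))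
    (x : ℝ) :
    Tendsto (fun u : ℝ => u ^ 2 * (1 - r (u ^ (-(2 / α)) * x)))
      atTop (nhds (a * |x| ^ α)) := by
  rcases eq_or_ne x 0 with rfl | hx
  · simp [hr0, Real.zero_rpow hα.ne']
  · have hc : Tendsto (fun u : ℝ => u ^ (-(2 / α))) atTop (nhds 0) :=
      tendsto_rpow_neg_atTop (by positivity)
    have hcx : Tendsto (fun u : ℝ => u ^ (-(2 / α)) * x) atTop
        (nhdsWithin 0 {(0 : ℝ)}ᶜ) := by
      apply tendsto_nhdsWithin_of_tendsto_nhds_of_eventually_within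
      · simpa using hc.mul_const x
      · filter_upwards [eventually_gt_atTop (0 : ℝ)] with u hu
        have : (0 : ℝ) < u ^ (-(2 / α)) := Real.rpow_pos_of_pos hu _
        simp [Set.mem_compl_iff, mul_ne_zero this.ne' hx]
    have h2 := (hr.comp hcx).mul_const (a * |x| ^ α)
    rw [one_mul] at h2
    refine Tendsto.congr' ?_ h2
    filter_upwards [eventually_gt_atTop (0 : ℝ)] with u hu
    have hcpos : (0 : ℝ) < u ^ (-(2 / α)) := Real.rpow_pos_of_pos hu _
    have hc2 : |u ^ (-(2 / α)) * x| ^ α = (u ^ 2)⁻¹ * |x| ^ α := by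
      rw [abs_mul, Real.mul_rpow (abs_nonneg _) (abs_nonneg _),
        abs_of_pos hcpos, ← Real.rpow_natCast u 2, ← Real.rpow_neg hu.le,
        ← Real.rpow_mul hu.le]
      congr 2
      field_simp
      norm_num
    have hxα : (0 : ℝ) < |x| ^ α := Real.rpow_pos_of_pos (abs_pos.mpr hx) _
    simp only [Function.comp]
    rw [hc2]
    field_simp

theorem stmt_6
    (r : ℝ → ℝ) (a α : ℝ) (ha : 0 < a) (hα : 0 < α) (hα2 : α ≤ 2)
    (hr0 : r 0 = 1)
    (hr : Tendsto (fun t => (1 - r t) / (a * |t| ^ α))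
      (nhdsWithin 0 {(0 : ℝ)}ᶜ) (nhds 1))
    (s t : ℝ) :
    Tendsto (fun u : ℝ =>
        u ^ 2 * (2 * (1 - r (u ^ (-(2 / α)) * (t - s))) -
          (r (u ^ (-(2 / α)) * t) - r (u ^ (-(2 / α)) * s)) ^ 2))
      atTop (nhds (2 * a * |t - s| ^ α)) := by
  have hts := stmt_6_aux r a α ha hα hr0 hr (t - s)
  have ht := stmt_6_aux r a α ha hα hr0 hr t
  have hs := stmt_6_aux r a α ha hα hr0 hr s
  have hinv : Tendsto (fun u : ℝ => (u ^ 2)⁻¹) atTop (nhds 0) :=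
    (tendsto_pow_atTop (two_ne_zero)).inv_tendsto_atTop
  have H := (hts.const_mul 2).sub ((((hs.sub ht).pow 2)).mul hinv)
  rw [mul_zero, sub_zero, ← mul_assoc] at H
  refine Tendsto.congr' ?_ H
  filter_upwards [eventually_gt_atTop (0 : ℝ)] with u hu
  have hu2 : (u : ℝ) ^ 2 ≠ 0 := by positivity
  field_simp
  ring
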